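/- arXiv:2001.07620 — 2 statements merged into one kernel-verified Lean document; each statement's English description precedes it below -/
import Mathlib

section
/- Let σ : ℝ → ℝ, let P be an N×N real permutation matrix, S ∈ ℝ^{N×N}, X ∈ ℝ^{N×F}, and let A_0, …, A_K ∈ ℝ^{F×G} be coefficient matrices. Then the single GCNN layer output satisfies σ( ∑_{k=0}^K (Pᵀ S P)^k (Pᵀ X) A_k ) = Pᵀ σ( ∑_{k=0}^K S^k X A_k ), where σ is applied entrywise. -/
open Matrix

/-- A single GCNN layer `σ(∑_{k=0}^K S^k X A_k)` (with `σ` applied entrywise) is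
permutation equivariant: for a permutation matrix `P` (entries in `{0,1}` with
`Pᵀ * P = 1`), `σ(∑_k (Pᵀ S P)^k (Pᵀ X) A_k) = Pᵀ σ(∑_k S^k X A_k)`. -/
theorem gcnn_layer_permutation_equivariant {N F G K : ℕ} (σ : ℝ → ℝ)
    (P S : Matrix (Fin N) (Fin N) ℝ)
    (hP01 : ∀ i j, P i j = 0 ∨ P i j = 1) (hP : Pᵀ * P = 1)
    (X : Matrix (Fin N) (Fin F) ℝ) (A : ℕ → Matrix (Fin F) (Fin G) ℝ) :
    (∑ k ∈ Finset.range (K + 1), (Pᵀ * S * P) ^ k * (Pᵀ * X) * A k).map σ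
      = Pᵀ * (∑ k ∈ Finset.range (K + 1), S ^ k * X * A k).map σ := by
  have hPPt : P * Pᵀ = 1 := mul_eq_one_comm.mp hP
  -- each column of P has a unique 1
  have hcol : ∀ i, ∃! l, P l i = 1 := by
    intro i
    have hsum : ∑ l, P l i = 1 := by
      have := congrFun (congrFun hP i) i
      simp only [Matrix.mul_apply, Matrix.one_apply_eq, Matrix.transpose_apply] at this
      rw [← this]
      refine Finset.sum_congr rfl fun l _ => ?_
      rcases hP01 l i with h | h <;> simp [h]
    have hex : ∃ l, P l i = 1 := by
      by_contra h
      push_neg at h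
      have : ∑ l, P l i = 0 := Finset.sum_eq_zero fun l _ => (hP01 l i).resolve_right (h l)
      rw [this] at hsum; norm_num at hsum
    obtain ⟨l₀, hl₀⟩ := hex
    refine ⟨l₀, hl₀, fun l hl => ?_⟩
    by_contra hne
    have hle : ∑ x ∈ ({l, l₀} : Finset (Fin N)), P x i ≤ ∑ x, P x i :=
      Finset.sum_le_sum_of_subset_of_nonneg (Finset.subset_univ _)
        (fun x _ _ => by rcases hP01 x i with h | h <;> simp [h])
    rw [Finset.sum_pair hne, hl, hl₀, hsum] at hle
    norm_num at hle
  -- map commutes with left multiplication by Pᵀ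
  have hmap : ∀ {m : ℕ} (M : Matrix (Fin N) (Fin m) ℝ),
      (Pᵀ * M).map σ = Pᵀ * M.map σ := by
    intro m M
    ext i j
    obtain ⟨l₀, hl₀, huniq⟩ := hcol i
    have hzero : ∀ l, l ≠ l₀ → P l i = 0 := fun l hl =>
      (hP01 l i).resolve_right fun h => hl (huniq l h)
    have h1 : ∑ l, P l i * M l j = M l₀ j := by
      rw [Finset.sum_eq_single l₀ (fun l _ hl => by rw [hzero l hl]; ring)
        (fun h => absurd (Finset.mem_univ l₀) h)]
      rw [hl₀]; ring
    have h2 : ∑ l, P l i * σ (M l j) = σ (M l₀ j) := by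
      rw [Finset.sum_eq_single l₀ (fun l _ hl => by rw [hzero l hl]; ring)
        (fun h => absurd (Finset.mem_univ l₀) h)]
      rw [hl₀]; ring
    simp only [Matrix.map_apply, Matrix.mul_apply, Matrix.transpose_apply, h1, h2]
  -- conjugation of powers
  have hpow : ∀ k, (Pᵀ * S * P) ^ k = Pᵀ * S ^ k * P := by
    intro k
    induction k with
    | zero => simp [hP]
    | succ k ih =>
      rw [pow_succ, ih, pow_succ]
      calc Pᵀ * S ^ k * P * (Pᵀ * S * P)
          = Pᵀ * S ^ k * (P * Pᵀ) * S * P := by noncomm_ring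
        _ = Pᵀ * (S ^ k * S) * P := by rw [hPPt]; noncomm_ring
  have hsum : ∑ k ∈ Finset.range (K + 1), (Pᵀ * S * P) ^ k * (Pᵀ * X) * A k
      = Pᵀ * ∑ k ∈ Finset.range (K + 1), S ^ k * X * A k := by
    rw [Matrix.mul_sum]
    refine Finset.sum_congr rfl fun k _ => ?_
    rw [hpow]
    simp only [Matrix.mul_assoc]
    rw [← Matrix.mul_assoc P Pᵀ, hPPt, Matrix.one_mul]
  rw [hsum, hmap]
end

section
/- (Permutation equivariance of GCNNs.) Let σ : ℝ → ℝ, let P be an N×N real permutation matrix, S ∈ ℝ^{N×N}, and for each layer l = 1, …, L let A_{l,0}, …, A_{l,K} ∈ ℝ^{F_{l-1}×F_l} be coefficient matrices. Define recursively X_0 = X ∈ ℝ^{N×F_0} and X_l = σ( ∑_{k=0}^K S^k X_{l-1} A_{l,k} ), and likewise X'_0 = Pᵀ X and X'_l = σ( ∑_{k=0}^K (Pᵀ S P)^k X'_{l-1} A_{l,k} ), with σ applied entrywise. Then X'_L = Pᵀ X_L; that is, the GCNN output on the permuted graph with permuted input is the permutation of the GCNN output on the original graph. -/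
open Matrix

/-- Permutation equivariance of GCNNs. Let `P` be an `N × N` permutation matrix
(entries in `{0,1}` with `Pᵀ * P = 1`), `S ∈ ℝ^{N×N}` a shift operator, `F l` the
feature dimension of layer `l`, and `A l k ∈ ℝ^{F l × F (l + 1)}` the coefficient
matrices of layer `l + 1`. If `X` follows the GCNN recursion
`X (l+1) = σ(∑_{k=0}^K S^k (X l) (A l k))` and `X'` follows the same recursion on the
permuted graph `Pᵀ S P` with permuted input `X' 0 = Pᵀ X 0`, then `X' L = Pᵀ X L`. -/
theorem gcnn_permutation_equivariant {N K L : ℕ} (σ : ℝ → ℝ)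
    (P S : Matrix (Fin N) (Fin N) ℝ)
    (hP01 : ∀ i j, P i j = 0 ∨ P i j = 1) (hP : Pᵀ * P = 1)
    (F : ℕ → ℕ) (A : (l : ℕ) → ℕ → Matrix (Fin (F l)) (Fin (F (l + 1))) ℝ)
    (X X' : (l : ℕ) → Matrix (Fin N) (Fin (F l)) ℝ)
    (hX : ∀ l, X (l + 1) = (∑ k ∈ Finset.range (K + 1), S ^ k * X l * A l k).map σ)
    (hX' : ∀ l, X' (l + 1)
      = (∑ k ∈ Finset.range (K + 1), (Pᵀ * S * P) ^ k * X' l * A l k).map σ)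
    (h0 : X' 0 = Pᵀ * X 0) :
    X' L = Pᵀ * X L := by
  -- each column of P has a unique 1
  have key : ∀ i, ∃ t, P t i = 1 ∧ ∀ s, s ≠ t → P s i = 0 := by
    intro i
    have h1 : ∑ t, P t i * P t i = 1 := by
      have := congrFun (congrFun hP i) i
      simpa [Matrix.mul_apply, Matrix.one_apply, Matrix.transpose_apply] using this
    have h2 : ∑ t, P t i = 1 := by
      rw [← h1]; apply Finset.sum_congr rfl; intro t _
      rcases hP01 t i with h | h <;> simp [h]
    have hnn : ∀ s, 0 ≤ P s i := by
      intro s; rcases hP01 s i with h | h <;> simp [h]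
    have hex : ∃ t, P t i = 1 := by
      by_contra hc
      push_neg at hc
      have : ∑ t, P t i = 0 :=
        Finset.sum_eq_zero fun t _ => (hP01 t i).resolve_right (hc t)
      rw [this] at h2; norm_num at h2
    obtain ⟨t, ht⟩ := hex
    refine ⟨t, ht, fun s hs => ?_⟩
    have hz : ∑ x ∈ Finset.univ.erase t, P x i = 0 := by
      have h3 := Finset.add_sum_erase Finset.univ (fun x => P x i) (Finset.mem_univ t)
      rw [h2, ht] at h3
      linarith
    exact (Finset.sum_eq_zero_iff_of_nonneg fun x _ => hnn x).mp hz s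
      (Finset.mem_erase.mpr ⟨hs, Finset.mem_univ s⟩)
  -- multiplying by Pᵀ commutes with entrywise map
  have hmap : ∀ {m : ℕ} (M : Matrix (Fin N) (Fin m) ℝ),
      Pᵀ * M.map σ = (Pᵀ * M).map σ := by
    intro m M
    ext i j
    obtain ⟨t, ht1, ht0⟩ := key i
    have hsum : ∀ g : Fin N → ℝ, ∑ s, P s i * g s = g t := by
      intro g
      rw [Finset.sum_eq_single t]
      · rw [ht1]; ring
      · intro s _ hs; rw [ht0 s hs]; ring
      · simp
    simp [Matrix.mul_apply, Matrix.map_apply, Matrix.transpose_apply, hsum]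
  have hPPt : P * Pᵀ = 1 := mul_eq_one_comm.mp hP
  have hpow : ∀ k : ℕ, (Pᵀ * S * P) ^ k * Pᵀ = Pᵀ * S ^ k := by
    intro k
    induction k with
    | zero => simp
    | succ n ih =>
      rw [pow_succ, pow_succ, mul_assoc ((Pᵀ * S * P) ^ n)]
      have : Pᵀ * S * P * Pᵀ = Pᵀ * S := by
        rw [mul_assoc, hPPt, mul_one]
      rw [this, ← mul_assoc, ih, mul_assoc]
  -- main induction
  induction L with
  | zero => exact h0
  | succ l ih =>
    have hterm : (∑ k ∈ Finset.range (K + 1), (Pᵀ * S * P) ^ k * (Pᵀ * X l) * A l k)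
        = Pᵀ * ∑ k ∈ Finset.range (K + 1), S ^ k * X l * A l k := by
      rw [Matrix.mul_sum]
      apply Finset.sum_congr rfl
      intro k _
      simp only [← Matrix.mul_assoc, hpow]
    rw [hX' l, ih, hterm, ← hmap, ← hX l]
end
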